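/- Let 0 < a < b and λ ∈ [0,1]. With H = 2ab/(a+b), A = (a+b)/2, G = √(ab), and L = (b−a)/(ln b − ln a), the following inequality holds: |(1−λ)·H + λ·A − G²/L| ≤ (ab(b−a)/2)·{ C₁(λ;a,b) + C₁(λ;b,a) }. -/

import Mathlib

open MeasureTheory Set

lemma integral_sub_div_sq (m u v : ℝ) (hu : 0 < u) (huv : u ≤ v) :
    ∫ x in u..v, (x - m) / x ^ 2 =
      (Real.log v + m / v) - (Real.log u + m / u) := by
  have hsub : Set.uIcc u v = Set.Icc u v := Set.uIcc_of_le huv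
  apply intervalIntegral.integral_eq_sub_of_hasDerivAt
  · intro x hx
    rw [hsub] at hx
    have hx0 : 0 < x := lt_of_lt_of_le hu hx.1
    have h1 : HasDerivAt Real.log x⁻¹ x := Real.hasDerivAt_log (ne_of_gt hx0)
    have h2 : HasDerivAt (fun y : ℝ => m / y) (m * (-(x ^ 2)⁻¹)) x := by
      simpa [div_eq_mul_inv] using (hasDerivAt_inv (ne_of_gt hx0)).const_mul m
    have := h1.add h2
    convert this using 1
    · rfl
    field_simp
    ring
  · apply ContinuousOn.intervalIntegrable
    apply ContinuousOn.div (by fun_prop) (by fun_prop)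
    intro x hx
    rw [hsub] at hx
    exact pow_ne_zero _ (ne_of_gt (lt_of_lt_of_le hu hx.1))

/-- `C₁(λ; u, ϑ)` from Theorem 2.2. -/
noncomputable def C1 (lam u v : ℝ) : ℝ :=
  (1 / (v - u) ^ 2) *
    (-4 + (lam * (v - u) + 2 * u) * (3 * u + v) / (u * (u + v))
      + 2 * Real.log (2 * u * (u + v) / (2 * u + lam * (v - u)) ^ 2))

set_option maxHeartbeats 2000000 in
theorem prop_means1 (a b : ℝ) (ha : 0 < a) (hab : a < b)
    (lam : ℝ) (hlam : lam ∈ Icc (0:ℝ) 1) :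
    |(1 - lam) * (2 * a * b / (a + b)) + lam * ((a + b) / 2) -
      Real.sqrt (a * b) ^ 2 / ((b - a) / (Real.log b - Real.log a))| ≤
      (a * b * (b - a) / 2) * (C1 lam a b + C1 lam b a) := by
  obtain ⟨hlam0, hlam1⟩ := hlam
  have hb : 0 < b := ha.trans hab
  have hd : 0 < b - a := sub_pos.2 hab
  set c : ℝ := (a + b) / 2 with hcdef
  set m1 : ℝ := (2 * a + lam * (b - a)) / 2 with hm1def
  set m2 : ℝ := (2 * b - lam * (b - a)) / 2 with hm2def
  have ham1 : a ≤ m1 := by rw [hm1def]; nlinarith [mul_nonneg hlam0 hd.le]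
  have hm1c : m1 ≤ c := by
    rw [hm1def, hcdef]; nlinarith [mul_nonneg (sub_nonneg.2 hlam1) hd.le]
  have hcm2 : c ≤ m2 := by
    rw [hm2def, hcdef]; nlinarith [mul_nonneg (sub_nonneg.2 hlam1) hd.le]
  have hm2b : m2 ≤ b := by rw [hm2def]; nlinarith [mul_nonneg hlam0 hd.le]
  have hm1 : 0 < m1 := lt_of_lt_of_le ha ham1
  have hc : 0 < c := lt_of_lt_of_le hm1 hm1c
  have hm2 : 0 < m2 := lt_of_lt_of_le hc hcm2
  have e1 : (0:ℝ) < 2 * a + lam * (b - a) := by nlinarith [mul_nonneg hlam0 hd.le]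
  have e2 : (0:ℝ) < 2 * b - lam * (b - a) := by
    nlinarith [mul_nonneg (sub_nonneg.2 hlam1) hd.le]
  have hint : ∀ m u v : ℝ, 0 < u → u ≤ v →
      ∫ x in u..v, a * b * ((x - m) / x ^ 2)
        = a * b * ((Real.log v + m / v) - (Real.log u + m / u)) := by
    intro m u v hu huv
    rw [intervalIntegral.integral_const_mul, integral_sub_div_sq m u v hu huv]
  have hI1 := hint m1 a m1 ha ham1
  have hI2 := hint m1 m1 c hm1 hm1c
  have hI3 := hint m2 c m2 hc hcm2
  have hI4 := hint m2 m2 b hm2 hm2b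
  have hneg : ∀ m u v : ℝ, 0 < u → u ≤ v → (∀ x ∈ Icc u v, x ≤ m) →
      (∫ x in u..v, a * b * ((x - m) / x ^ 2)) ≤ 0 := by
    intro m u v hu huv hle
    have h0 : 0 ≤ ∫ x in u..v, a * b * ((m - x) / x ^ 2) := by
      apply intervalIntegral.integral_nonneg huv
      intro x hx
      exact mul_nonneg (by positivity)
        (div_nonneg (by linarith [hle x hx]) (sq_nonneg x))
    have heq : (∫ x in u..v, a * b * ((x - m) / x ^ 2))
        = -∫ x in u..v, a * b * ((m - x) / x ^ 2) := by
      rw [← intervalIntegral.integral_neg]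
      exact intervalIntegral.integral_congr fun x _ => by ring
    rw [heq]
    linarith
  have hI1neg : (∫ x in a..m1, a * b * ((x - m1) / x ^ 2)) ≤ 0 :=
    hneg m1 a m1 ha ham1 fun x hx => hx.2
  have hI3neg : (∫ x in c..m2, a * b * ((x - m2) / x ^ 2)) ≤ 0 :=
    hneg m2 c m2 hc hcm2 fun x hx => hx.2
  have hI2nn : 0 ≤ (∫ x in m1..c, a * b * ((x - m1) / x ^ 2)) := by
    apply intervalIntegral.integral_nonneg hm1c
    intro x hx
    exact mul_nonneg (by positivity)
      (div_nonneg (by linarith [hx.1]) (sq_nonneg x))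
  have hI4nn : 0 ≤ (∫ x in m2..b, a * b * ((x - m2) / x ^ 2)) := by
    apply intervalIntegral.integral_nonneg hm2b
    intro x hx
    exact mul_nonneg (by positivity)
      (div_nonneg (by linarith [hx.1]) (sq_nonneg x))
  have hlogab : Real.log a < Real.log b := Real.log_lt_log ha hab
  have hL : Real.log b - Real.log a ≠ 0 := ne_of_gt (sub_pos.2 hlogab)
  have hs : Real.sqrt (a * b) ^ 2 = a * b := Real.sq_sqrt (by positivity)
  have hE : ((1 - lam) * (2 * a * b / (a + b)) + lam * ((a + b) / 2) -
      Real.sqrt (a * b) ^ 2 / ((b - a) / (Real.log b - Real.log a))) * (b - a)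
      = -((∫ x in a..m1, a * b * ((x - m1) / x ^ 2))
        + (∫ x in m1..c, a * b * ((x - m1) / x ^ 2))
        + (∫ x in c..m2, a * b * ((x - m2) / x ^ 2))
        + (∫ x in m2..b, a * b * ((x - m2) / x ^ 2))) := by
    rw [hI1, hI2, hI3, hI4, hs, div_self hm1.ne', div_self hm2.ne',
      hm1def, hm2def, hcdef]
    have hab' : a + b ≠ 0 := by positivity
    field_simp [ha.ne', hb.ne', hd.ne', hL, e1.ne', e2.ne', hab']
    ring
  have hlog1 : Real.log (2 * a * (a + b) / (2 * a + lam * (b - a)) ^ 2)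
      = Real.log a + Real.log c - 2 * Real.log m1 := by
    have h : 2 * a * (a + b) / (2 * a + lam * (b - a)) ^ 2 = a * c / m1 ^ 2 := by
      rw [hcdef, hm1def]; field_simp [e1.ne']
    rw [h, Real.log_div (by positivity) (by positivity),
      Real.log_mul (ne_of_gt ha) (ne_of_gt hc), Real.log_pow]
    push_cast
    ring
  have hlog2 : Real.log (2 * b * (b + a) / (2 * b + lam * (a - b)) ^ 2)
      = Real.log b + Real.log c - 2 * Real.log m2 := by
    have h : 2 * b * (b + a) / (2 * b + lam * (a - b)) ^ 2 = b * c / m2 ^ 2 := by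
      have h0 : 2 * b + lam * (a - b) = 2 * b - lam * (b - a) := by ring
      rw [h0, hcdef, hm2def]; field_simp [e2.ne']; ring
    rw [h, Real.log_div (by positivity) (by positivity),
      Real.log_mul (ne_of_gt hb) (ne_of_gt hc), Real.log_pow]
    push_cast
    ring
  have key : |(1 - lam) * (2 * a * b / (a + b)) + lam * ((a + b) / 2) -
      Real.sqrt (a * b) ^ 2 / ((b - a) / (Real.log b - Real.log a))| * (b - a)
      ≤ (a * b * (b - a) / 2) * (C1 lam a b + C1 lam b a) * (b - a) := by
    calc |(1 - lam) * (2 * a * b / (a + b)) + lam * ((a + b) / 2) -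
        Real.sqrt (a * b) ^ 2 / ((b - a) / (Real.log b - Real.log a))| * (b - a)
        = |((1 - lam) * (2 * a * b / (a + b)) + lam * ((a + b) / 2) -
          Real.sqrt (a * b) ^ 2 / ((b - a) / (Real.log b - Real.log a))) * (b - a)| := by
          rw [abs_mul, abs_of_pos hd]
      _ = |(∫ x in a..m1, a * b * ((x - m1) / x ^ 2))
          + (∫ x in m1..c, a * b * ((x - m1) / x ^ 2))
          + (∫ x in c..m2, a * b * ((x - m2) / x ^ 2))
          + (∫ x in m2..b, a * b * ((x - m2) / x ^ 2))| := by
          rw [hE, abs_neg]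
      _ ≤ |(∫ x in a..m1, a * b * ((x - m1) / x ^ 2))|
          + |(∫ x in m1..c, a * b * ((x - m1) / x ^ 2))|
          + |(∫ x in c..m2, a * b * ((x - m2) / x ^ 2))|
          + |(∫ x in m2..b, a * b * ((x - m2) / x ^ 2))| :=
          (abs_add_le _ _).trans (add_le_add_left ((abs_add_le _ _).trans
            (add_le_add_left (abs_add_le _ _) _)) _)
      _ = -(∫ x in a..m1, a * b * ((x - m1) / x ^ 2))
          + (∫ x in m1..c, a * b * ((x - m1) / x ^ 2))
          + -(∫ x in c..m2, a * b * ((x - m2) / x ^ 2))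
          + (∫ x in m2..b, a * b * ((x - m2) / x ^ 2)) := by
          rw [abs_of_nonpos hI1neg, abs_of_nonneg hI2nn,
            abs_of_nonpos hI3neg, abs_of_nonneg hI4nn]
      _ = (a * b * (b - a) / 2) * (C1 lam a b + C1 lam b a) * (b - a) := by
          rw [hI1, hI2, hI3, hI4, div_self hm1.ne', div_self hm2.ne']
          simp only [C1]
          rw [hlog1, hlog2, hm1def, hm2def, hcdef]
          have hab' : a + b ≠ 0 := by positivity
          have hd' : a - b ≠ 0 := by intro h; apply hd.ne'; linarith
          have e2' : 2 * b + lam * (a - b) ≠ 0 := by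
            intro h; apply e2.ne'; linarith
          field_simp [ha.ne', hb.ne', hd.ne', hd', e1.ne', e2.ne', e2', hab']
          ring
  have := le_of_mul_le_mul_right key hd
  rw [hcdef]
  exact this
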